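/- Let X be a real Banach space, A : X → Set X an accretive operator with zer A ≠ ∅, and for each γ > 0 let J_γ : X → X be a resolvent function of A. Let α ∈ [0,1), f : X → X an α-contraction, x ∈ X, e* ∈ X, and set J = 2⌈1/(1 − α)⌉, α_n = 2/((1 − α)(n + J)), λ_n = (n + J)/(n + J − 1), e_n = (1/(n + J)²) • e* for all n ∈ ℕ; let (x_n) be the VAMe iteration x_0 = x, x_{n+1} = α_n • f(x_n) + (1 − α_n) • J_{λ_n}(x_n) + e_n. Let z ∈ zer A and K_z ∈ ℕ, K_z ≥ 1, with K_z ≥ max{‖x − z‖, ‖f(z) − z‖/(1 − α)} + ⌈‖e*‖/(J − 1)⌉. Then for all n ∈ ℕ, ‖x_{n+1} − x_n‖ ≤ (3·J·K_z + ‖e*‖)/((1 − α)(n + J)); consequently, Φ₀(k) = (3·J·K_z + ⌈‖e*‖⌉)·⌈1/(1 − α)⌉·(k + 1) − J is a rate of asymptotic regularity of (x_n). -/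

import Mathlib

section Aux
variable {X : Type*} [NormedAddCommGroup X] [NormedSpace ℝ X]
variable (A : X → Set X)
variable (hA : ∀ x y u v : X, u ∈ A x → v ∈ A y → ∀ γ : ℝ, 0 < γ →
      ‖x - y‖ ≤ ‖x - y + γ • (u - v)‖)
variable (Jr : ℝ → X → X)
variable (hJ : ∀ γ : ℝ, 0 < γ → ∀ x : X, γ⁻¹ • (x - Jr γ x) ∈ A (Jr γ x))

include hA hJ

theorem stmt17_fix {z : X} (hz : (0:X) ∈ A z) (γ : ℝ) (hγ : 0 < γ) : Jr γ z = z := by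
  have h2 := hA (Jr γ z) z _ 0 (hJ γ hγ z) hz γ hγ
  have h3 : Jr γ z - z + γ • (γ⁻¹ • (z - Jr γ z) - 0) = 0 := by
    rw [sub_zero, smul_inv_smul₀ (ne_of_gt hγ)]; abel
  rw [h3, norm_zero] at h2
  have := norm_nonneg (Jr γ z - z)
  have h4 : ‖Jr γ z - z‖ = 0 := le_antisymm h2 this
  rw [norm_eq_zero, sub_eq_zero] at h4
  exact h4

theorem stmt17_ne (γ : ℝ) (hγ : 0 < γ) (p q : X) : ‖Jr γ p - Jr γ q‖ ≤ ‖p - q‖ := by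
  have h2 := hA (Jr γ p) (Jr γ q) _ _ (hJ γ hγ p) (hJ γ hγ q) γ hγ
  have h3 : Jr γ p - Jr γ q + γ • (γ⁻¹ • (p - Jr γ p) - γ⁻¹ • (q - Jr γ q)) = p - q := by
    rw [smul_sub, smul_inv_smul₀ (ne_of_gt hγ), smul_inv_smul₀ (ne_of_gt hγ)]; abel
  rw [h3] at h2
  exact h2

theorem stmt17_res (μ ν : ℝ) (hμ : 0 < μ) (hμν : μ ≤ ν) (p : X) :
    ‖Jr μ p - Jr ν p‖ ≤ (1 - μ/ν) * ‖p - Jr ν p‖ := by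
  have hν : 0 < ν := lt_of_lt_of_le hμ hμν
  have hmem : μ⁻¹ • ((μ/ν) • (p - Jr ν p)) ∈ A (Jr ν p) := by
    have heq : μ⁻¹ • ((μ/ν) • (p - Jr ν p)) = ν⁻¹ • (p - Jr ν p) := by
      rw [smul_smul]; congr 1; field_simp
    rw [heq]; exact hJ ν hν p
  have h2 := hA (Jr μ p) (Jr ν p) _ _ (hJ μ hμ p) hmem μ hμ
  have h3 : Jr μ p - Jr ν p + μ • (μ⁻¹ • (p - Jr μ p) - μ⁻¹ • ((μ/ν) • (p - Jr ν p)))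
      = (1 - μ/ν) • (p - Jr ν p) := by
    rw [smul_sub, smul_inv_smul₀ (ne_of_gt hμ), smul_inv_smul₀ (ne_of_gt hμ)]
    module
  rw [h3, norm_smul, Real.norm_eq_abs, abs_of_nonneg (by
    rw [sub_nonneg]; exact div_le_one_of_le₀ hμν hν.le)] at h2
  exact h2

end Aux


lemma stmt17_base (α K E J : ℝ) (hα0 : 0 ≤ α) (hα1 : α < 1) (hJ : 2 ≤ J)
    (hK : 1 ≤ K) (hE : 0 ≤ E) :
    2*K + E/J^2 ≤ (3*J*K + E)/((1-α)*J) := by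
  have ht : (0:ℝ) < 1 - α := by linarith
  have hJ0 : (0:ℝ) < J := by linarith
  rw [← sub_nonneg]
  have e1 : (3*J*K + E)/((1-α)*J) - (2*K + E/J^2)
      = (3*J^2*K + E*J - 2*K*(1-α)*J^2 - E*(1-α)) / ((1-α)*J^2) := by
    field_simp
    ring
  rw [e1]
  apply div_nonneg _ (by positivity)
  nlinarith [mul_nonneg (mul_nonneg hα0 (by linarith : (0:ℝ) ≤ K)) (sq_nonneg J),
    mul_nonneg hE (by linarith : (0:ℝ) ≤ J - 1)]

lemma stmt17_num (α K E J m : ℝ) (hα0 : 0 ≤ α) (hα1 : α < 1) (hJ : 2 ≤ J)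
    (hK : 1 ≤ K) (hE : 0 ≤ E) (hm : 2 ≤ m) :
    0 ≤ (3*J*K+E)*m*(m+1) - (4*K*m*(m+1) + 2*K*(m+1)*((1-α)*(m+1)-2)
      + (1-α)*E*(2*m+1)) := by
  have hA : 0 ≤ (3*J-6)*K*(m*(m+1)) := by
    apply mul_nonneg (mul_nonneg (by linarith) (by linarith))
    positivity
  have hB : 0 ≤ 2*K*((m+1)*((m+2)-(1-α)*(m+1))) := by
    apply mul_nonneg (by linarith)
    apply mul_nonneg (by linarith)
    nlinarith
  have hC : 0 ≤ E*(m*(m+1) - (1-α)*(2*m+1)) := by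
    apply mul_nonneg hE
    nlinarith
  nlinarith [hA, hB, hC]

lemma stmt17_ar (α K E J m sn sn1 b c : ℝ) (hα0 : 0 ≤ α) (hα1 : α < 1) (hJ : 2 ≤ J)
    (hK : 1 ≤ K) (hE : 0 ≤ E) (hm : 2 ≤ m) (htm : 2 ≤ (1-α)*(m+1)) (hsn : 0 ≤ sn)
    (hb : b = 2/((1-α)*(m+1))) (hc : c = 2/((1-α)*m))
    (hIH : sn ≤ (3*J*K+E)/((1-α)*m))
    (hkey : sn1 ≤ b*(α*sn) + (1-b)*sn + (1-b)*((1/m^2)*(2*K))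
      + (c-b)*(2*K) + (1/m^2 - 1/(m+1)^2)*E) :
    sn1 ≤ (3*J*K+E)/((1-α)*(m+1)) := by
  subst hb hc
  have ht : (0:ℝ) < 1 - α := by linarith
  have hm0 : (0:ℝ) < m := by linarith
  have hm10 : (0:ℝ) < m + 1 := by linarith
  have h1 : (2/((1-α)*(m+1)))*(α*sn) + (1 - 2/((1-α)*(m+1)))*sn = (1 - 2/(m+1))*sn := by
    field_simp
    ring
  have h2 : (1 - 2/(m+1))*sn ≤ (1 - 2/(m+1))*((3*J*K+E)/((1-α)*m)) := by
    apply mul_le_mul_of_nonneg_left hIH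
    rw [sub_nonneg, div_le_one hm10]
    linarith
  have harith : (1 - 2/(m+1))*((3*J*K+E)/((1-α)*m))
      + (2/((1-α)*m) - 2/((1-α)*(m+1)))*(2*K)
      + (1 - 2/((1-α)*(m+1)))*((1/m^2)*(2*K))
      + (1/m^2 - 1/(m+1)^2)*E ≤ (3*J*K+E)/((1-α)*(m+1)) := by
    rw [← sub_nonneg]
    have e1 : (3*J*K+E)/((1-α)*(m+1)) - ((1 - 2/(m+1))*((3*J*K+E)/((1-α)*m))
        + (2/((1-α)*m) - 2/((1-α)*(m+1)))*(2*K)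
        + (1 - 2/((1-α)*(m+1)))*((1/m^2)*(2*K))
        + (1/m^2 - 1/(m+1)^2)*E)
        = ((3*J*K+E)*m*(m+1) - (4*K*m*(m+1) + 2*K*(m+1)*((1-α)*(m+1)-2)
            + (1-α)*E*(2*m+1))) / ((1-α)*m^2*(m+1)^2) := by
      field_simp
      ring
    rw [e1]
    exact div_nonneg (stmt17_num α K E J m hα0 hα1 hJ hK hE hm) (by positivity)
  linarith only [hkey, h1, h2, harith]

lemma stmt17_harr (m : ℝ) (hm : 2 ≤ m) : 1/m^2 ≤ 1/(m-1) - 1/m := by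
  have h1 : (0:ℝ) < m - 1 := by linarith
  have h0 : (0:ℝ) < m := by linarith
  rw [div_sub_div _ _ h1.ne' h0.ne', div_le_div_iff₀ (pow_pos h0 2) (mul_pos h1 h0)]
  nlinarith

set_option maxHeartbeats 2000000 in
/-- Linear rate of asymptotic regularity of the VAMe iteration for concrete
instances of the parameter sequences. -/
theorem stmt_17 {X : Type*} [NormedAddCommGroup X] [NormedSpace ℝ X] [CompleteSpace X]
    (A : X → Set X)
    (hA : ∀ x y u v : X, u ∈ A x → v ∈ A y → ∀ γ : ℝ, 0 < γ →
      ‖x - y‖ ≤ ‖x - y + γ • (u - v)‖)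
    (hzer : ∃ z : X, (0 : X) ∈ A z)
    (Jr : ℝ → X → X)
    (hJ : ∀ γ : ℝ, 0 < γ → ∀ x : X, γ⁻¹ • (x - Jr γ x) ∈ A (Jr γ x))
    (α : ℝ) (hα0 : 0 ≤ α) (hα1 : α < 1)
    (f : X → X) (hf : ∀ x y : X, ‖f x - f y‖ ≤ α * ‖x - y‖)
    (x : X) (estar : X)
    (Jn : ℕ) (hJn : Jn = 2 * ⌈1 / (1 - α)⌉₊)
    (a : ℕ → ℝ) (ha : ∀ n : ℕ, a n = 2 / ((1 - α) * ((n : ℝ) + Jn)))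
    (lam : ℕ → ℝ) (hlamdef : ∀ n : ℕ, lam n = ((n : ℝ) + Jn) / ((n : ℝ) + Jn - 1))
    (e : ℕ → X) (he : ∀ n : ℕ, e n = (1 / ((n : ℝ) + Jn) ^ 2) • estar)
    (xs : ℕ → X) (hxs0 : xs 0 = x)
    (hxs : ∀ n : ℕ, xs (n + 1) = a n • f (xs n) + (1 - a n) • Jr (lam n) (xs n) + e n)
    (z : X) (hz : (0 : X) ∈ A z)
    (Kz : ℕ) (hKz1 : 1 ≤ Kz)
    (hKz : max ‖x - z‖ (‖f z - z‖ / (1 - α)) +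
      (⌈‖estar‖ / ((Jn : ℝ) - 1)⌉₊ : ℝ) ≤ (Kz : ℝ)) :
    (∀ n : ℕ, ‖xs (n + 1) - xs n‖ ≤
      ((3 * Jn * Kz : ℕ) + ‖estar‖) / ((1 - α) * ((n : ℝ) + Jn))) ∧
    (∀ k : ℕ, ∀ n,
      (3 * Jn * Kz + ⌈‖estar‖⌉₊) * ⌈1 / (1 - α)⌉₊ * (k + 1) - Jn ≤ n →
      ‖xs (n + 1) - xs n‖ ≤ 1 / (k + 1)) := by
  have ht : (0:ℝ) < 1 - α := by linarith
  have hceil1 : (1:ℝ) ≤ (1-α) * (⌈1/(1-α)⌉₊ : ℝ) := by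
    have h := Nat.le_ceil (1/(1-α))
    have h2 : (1-α) * (1/(1-α)) ≤ (1-α) * (⌈1/(1-α)⌉₊ : ℝ) :=
      mul_le_mul_of_nonneg_left h ht.le
    rwa [mul_one_div, div_self (ne_of_gt ht)] at h2
  have hJR : ((Jn:ℝ)) = 2 * (⌈1/(1-α)⌉₊ : ℝ) := by rw [hJn]; push_cast; ring
  have hJt : (2:ℝ) ≤ (1-α) * Jn := by rw [hJR]; nlinarith
  have hJ2 : (2:ℝ) ≤ (Jn:ℝ) := by nlinarith [Nat.cast_nonneg (α := ℝ) Jn]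
  have hm2 : ∀ n : ℕ, (2:ℝ) ≤ (n:ℝ) + Jn := fun n => by
    have := Nat.cast_nonneg (α := ℝ) n; linarith
  have hm0 : ∀ n : ℕ, (0:ℝ) < (n:ℝ) + Jn := fun n => by linarith [hm2 n]
  have hmt : ∀ n : ℕ, (2:ℝ) ≤ (1-α) * ((n:ℝ) + Jn) := fun n => by
    have := Nat.cast_nonneg (α := ℝ) n
    nlinarith
  have hlam_pos : ∀ n : ℕ, 0 < lam n := fun n => by
    rw [hlamdef]
    have := hm2 n
    apply div_pos <;> linarith
  -- convenient facts about a
  have ha_pos : ∀ n : ℕ, 0 < a n := fun n => by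
    rw [ha]; have := hmt n; positivity
  have hta : ∀ n : ℕ, (1-α) * a n = 2 / ((n:ℝ) + Jn) := fun n => by
    rw [ha]; field_simp
  have ha1 : ∀ n : ℕ, a n ≤ 1 := fun n => by
    rw [ha]; rw [div_le_one (by linarith [hmt n])]; linarith [hmt n]
  -- fixed point and norms
  have hfixl : ∀ n : ℕ, Jr (lam n) z = z := fun n => stmt17_fix A hA Jr hJ hz _ (hlam_pos n)
  have hnel : ∀ n : ℕ, ∀ p q : X, ‖Jr (lam n) p - Jr (lam n) q‖ ≤ ‖p - q‖ :=
    fun n => stmt17_ne A hA Jr hJ _ (hlam_pos n)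
  set M : ℝ := max ‖x - z‖ (‖f z - z‖ / (1 - α)) with hM
  have hM0 : 0 ≤ M := le_trans (norm_nonneg _) (le_max_left _ _)
  have hMx : ‖x - z‖ ≤ M := le_max_left _ _
  have hMf : ‖f z - z‖ ≤ (1-α) * M := by
    have h := le_max_right ‖x - z‖ (‖f z - z‖ / (1 - α))
    rw [div_le_iff₀ ht] at h
    rw [← hM] at h; linarith
  -- norm of e n
  have hee : ∀ n : ℕ, ‖e n‖ = ‖estar‖ / ((n:ℝ) + Jn)^2 := fun n => by
    rw [he, norm_smul, Real.norm_eq_abs, abs_of_nonneg (by positivity : (0:ℝ) ≤ 1/((n:ℝ)+Jn)^2)]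
    rw [one_div, inv_mul_eq_div]
  -- boundedness
  have hbndE : ∀ n : ℕ, ‖xs n - z‖ ≤ M + ‖estar‖ * (1/((Jn:ℝ)-1) - 1/((n:ℝ)+Jn-1)) := by
    intro n
    induction n with
    | zero =>
      rw [hxs0]
      simpa using hMx
    | succ n ih =>
      have hm2n := hm2 n
      have hm0n := hm0 n
      have hmtn := hmt n
      have hJ1 : (0:ℝ) < (Jn:ℝ) - 1 := by linarith
      have hm1 : (0:ℝ) < (n:ℝ) + Jn - 1 := by linarith
      have hg : 0 ≤ 1/((Jn:ℝ)-1) - 1/((n:ℝ)+Jn-1) := by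
        rw [sub_nonneg]
        apply div_le_div_of_nonneg_left (by norm_num) hJ1
        have := Nat.cast_nonneg (α := ℝ) n; linarith
      have hid : xs (n+1) - z
          = a n • (f (xs n) - z) + (1 - a n) • (Jr (lam n) (xs n) - z) + e n := by
        rw [hxs]; module
      have h1 : ‖xs (n+1) - z‖ ≤ a n * ‖f (xs n) - z‖
          + (1 - a n) * ‖Jr (lam n) (xs n) - z‖ + ‖e n‖ := by
        rw [hid]
        refine le_trans (norm_add_le _ _) ?_
        refine add_le_add (le_trans (norm_add_le _ _) ?_) le_rfl
        rw [norm_smul, norm_smul, Real.norm_eq_abs, Real.norm_eq_abs,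
          abs_of_nonneg (ha_pos n).le, abs_of_nonneg (by linarith [ha1 n])]
      have h2 : ‖f (xs n) - z‖ ≤ α * ‖xs n - z‖ + (1-α)*M := by
        refine le_trans (norm_sub_le_norm_sub_add_norm_sub _ (f z) _) ?_
        exact add_le_add (hf _ _) hMf
      have h3 : ‖Jr (lam n) (xs n) - z‖ ≤ ‖xs n - z‖ := by
        have h := hnel n (xs n) z; rwa [hfixl n] at h
      have hcoef : 0 ≤ 1 - (1-α) * a n := by
        rw [hta n]
        have : 2 / ((n:ℝ) + Jn) ≤ 1 := by
          rw [div_le_one hm0n]; linarith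
        linarith
      have hIH2 : (1 - (1-α)*a n) * ‖xs n - z‖
          ≤ (1 - (1-α)*a n) * (M + ‖estar‖ * (1/((Jn:ℝ)-1) - 1/((n:ℝ)+Jn-1))) :=
        mul_le_mul_of_nonneg_left ih hcoef
      have harr : 1/((n:ℝ)+Jn)^2 ≤ 1/((n:ℝ)+Jn-1) - 1/((n:ℝ)+Jn) :=
        stmt17_harr _ hm2n
      have hE0 : (0:ℝ) ≤ ‖estar‖ := norm_nonneg _
      have hca : (1-α) * a n * (‖estar‖ * (1/((Jn:ℝ)-1) - 1/((n:ℝ)+Jn-1))) ≥ 0 := by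
        have := (ha_pos n).le
        have h5 : 0 ≤ ‖estar‖ * (1/((Jn:ℝ)-1) - 1/((n:ℝ)+Jn-1)) := mul_nonneg hE0 hg
        positivity
      have hcast : ((n+1:ℕ):ℝ) + Jn - 1 = (n:ℝ) + Jn := by push_cast; ring
      have hcast2 : ((n+1:ℕ):ℝ) = (n:ℝ) + 1 := by push_cast; ring
      rw [hcast]
      have he1 : ‖e n‖ = ‖estar‖ / ((n:ℝ)+Jn)^2 := hee n
      have hsplit : a n * ‖f (xs n) - z‖ ≤ a n * (α * ‖xs n - z‖ + (1-α)*M) :=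
        mul_le_mul_of_nonneg_left h2 (ha_pos n).le
      have hsplit2 : (1 - a n) * ‖Jr (lam n) (xs n) - z‖ ≤ (1 - a n) * ‖xs n - z‖ :=
        mul_le_mul_of_nonneg_left h3 (by linarith [ha1 n])
      have hEarr : ‖estar‖ / ((n:ℝ)+Jn)^2
          ≤ ‖estar‖ * (1/((n:ℝ)+Jn-1)) - ‖estar‖ * (1/((n:ℝ)+Jn)) := by
        have h := mul_le_mul_of_nonneg_left harr hE0
        rw [div_eq_mul_one_div]
        linarith only [h]
      have hring : a n * (α * ‖xs n - z‖ + (1-α)*M) + (1 - a n) * ‖xs n - z‖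
          = (1-(1-α)*a n) * ‖xs n - z‖ + (1-α)*a n*M := by ring
      have hring2 : (1-(1-α)*a n) * (M + ‖estar‖ * (1/((Jn:ℝ)-1) - 1/((n:ℝ)+Jn-1)))
          = M + ‖estar‖ * (1/((Jn:ℝ)-1) - 1/((n:ℝ)+Jn-1)) - (1-α)*a n*M
            - (1-α)*a n * (‖estar‖ * (1/((Jn:ℝ)-1) - 1/((n:ℝ)+Jn-1))) := by ring
      have hring3 : ‖estar‖*(1/((Jn:ℝ)-1) - 1/((n:ℝ)+Jn-1))
            + (‖estar‖*(1/((n:ℝ)+Jn-1)) - ‖estar‖*(1/((n:ℝ)+Jn)))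
          = ‖estar‖*(1/((Jn:ℝ)-1) - 1/((n:ℝ)+Jn)) := by ring
      linarith only [h1, hsplit, hsplit2, hIH2, hEarr, hca, he1, hring, hring2, hring3]
  have hbnd : ∀ n : ℕ, ‖xs n - z‖ ≤ (Kz:ℝ) := by
    intro n
    have h1 := hbndE n
    have h2 : ‖estar‖ / ((Jn:ℝ)-1) ≤ (⌈‖estar‖ / ((Jn : ℝ) - 1)⌉₊ : ℝ) := Nat.le_ceil _
    have h3 : (0:ℝ) < (n:ℝ) + Jn - 1 := by linarith [hm2 n]
    have h4 : 0 ≤ ‖estar‖ / ((n:ℝ) + Jn - 1) := by positivity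
    have h5 : ‖estar‖ * (1/((Jn:ℝ)-1) - 1/((n:ℝ)+Jn-1)) ≤ ‖estar‖ / ((Jn:ℝ)-1) := by
      rw [mul_sub, mul_one_div, mul_one_div]; linarith
    linarith [hKz]
  have hKz0 : (1:ℝ) ≤ (Kz:ℝ) := by exact_mod_cast hKz1
  have hMK : M ≤ (Kz:ℝ) := by
    have h2 : (0:ℝ) ≤ (⌈‖estar‖ / ((Jn : ℝ) - 1)⌉₊ : ℝ) := Nat.cast_nonneg _
    linarith [hKz]
  have hfzK : ‖f z - z‖ ≤ (1-α)*(Kz:ℝ) := by nlinarith [hMf, hMK]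
  have hJzb : ∀ n : ℕ, ‖Jr (lam n) (xs n) - z‖ ≤ (Kz:ℝ) := fun n => by
    have h := hnel n (xs n) z
    rw [hfixl n] at h
    exact le_trans h (hbnd n)
  have hfJd : ∀ n : ℕ, ‖f (xs n) - Jr (lam n) (xs n)‖ ≤ 2*(Kz:ℝ) := fun n => by
    have h1 := norm_sub_le_norm_sub_add_norm_sub (f (xs n)) (f z) (Jr (lam n) (xs n))
    have h2 := norm_sub_le_norm_sub_add_norm_sub (f z) z (Jr (lam n) (xs n))
    have h3 := hf (xs n) z
    have h4 : ‖z - Jr (lam n) (xs n)‖ = ‖Jr (lam n) (xs n) - z‖ := norm_sub_rev _ _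
    have h5 := mul_le_mul_of_nonneg_left (hbnd n) hα0
    linarith only [h1, h2, h3, h4, h5, hJzb n, hfzK]
  have hfd : ∀ n : ℕ, ‖f (xs n) - xs n‖ ≤ 2*(Kz:ℝ) := fun n => by
    have h1 := norm_sub_le_norm_sub_add_norm_sub (f (xs n)) (f z) (xs n)
    have h2 := norm_sub_le_norm_sub_add_norm_sub (f z) z (xs n)
    have h3 := hf (xs n) z
    have h4 : ‖z - xs n‖ = ‖xs n - z‖ := norm_sub_rev _ _
    have h5 := mul_le_mul_of_nonneg_left (hbnd n) hα0
    linarith only [h1, h2, h3, h4, h5, hbnd n, hfzK]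
  have hxJ : ∀ n : ℕ, ‖xs n - Jr (lam n) (xs n)‖ ≤ 2*(Kz:ℝ) := fun n => by
    have h1 := norm_sub_le_norm_sub_add_norm_sub (xs n) z (Jr (lam n) (xs n))
    have h4 : ‖z - Jr (lam n) (xs n)‖ = ‖Jr (lam n) (xs n) - z‖ := norm_sub_rev _ _
    linarith only [h1, h4, hbnd n, hJzb n]
  have hE0 : (0:ℝ) ≤ ‖estar‖ := norm_nonneg _
  -- main step bound
  have hstep : ∀ n : ℕ, ‖xs (n+1) - xs n‖
      ≤ (3*(Jn:ℝ)*(Kz:ℝ) + ‖estar‖) / ((1-α) * ((n:ℝ) + Jn)) := by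
    intro n
    induction n with
    | zero =>
      have hid : xs 1 - xs 0
          = a 0 • (f (xs 0) - xs 0) + (1 - a 0) • (Jr (lam 0) (xs 0) - xs 0) + e 0 := by
        rw [hxs 0]; module
      have h1 : ‖xs 1 - xs 0‖ ≤ a 0 * ‖f (xs 0) - xs 0‖
          + (1 - a 0) * ‖Jr (lam 0) (xs 0) - xs 0‖ + ‖e 0‖ := by
        rw [hid]
        refine le_trans (norm_add_le _ _) (add_le_add (le_trans (norm_add_le _ _) ?_) le_rfl)
        rw [norm_smul, norm_smul, Real.norm_eq_abs, Real.norm_eq_abs,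
          abs_of_nonneg (ha_pos 0).le, abs_of_nonneg (by linarith [ha1 0])]
      have h2 : ‖Jr (lam 0) (xs 0) - xs 0‖ = ‖xs 0 - Jr (lam 0) (xs 0)‖ := norm_sub_rev _ _
      have h3 : a 0 * ‖f (xs 0) - xs 0‖ ≤ a 0 * (2*(Kz:ℝ)) :=
        mul_le_mul_of_nonneg_left (hfd 0) (ha_pos 0).le
      have h4 : (1 - a 0) * ‖Jr (lam 0) (xs 0) - xs 0‖ ≤ (1 - a 0) * (2*(Kz:ℝ)) := by
        rw [h2]; exact mul_le_mul_of_nonneg_left (hxJ 0) (by linarith [ha1 0])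
      have h5 : ‖e 0‖ = ‖estar‖ / (((0:ℕ):ℝ) + Jn)^2 := hee 0
      have hbase := stmt17_base α (Kz:ℝ) ‖estar‖ (Jn:ℝ) hα0 hα1 hJ2 hKz0 hE0
      simp only [Nat.cast_zero, zero_add] at h5 ⊢
      linarith only [h1, h3, h4, h5, hbase]
    | succ n ih =>
      set m : ℝ := (n:ℝ) + Jn with hmdef
      have hc1 : ((n+1:ℕ):ℝ) + (Jn:ℝ) = m + 1 := by rw [hmdef]; push_cast; ring
      have hm2n : (2:ℝ) ≤ m := hm2 n
      have hm0' : (0:ℝ) < m := by linarith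
      have hm1' : (0:ℝ) < m - 1 := by linarith
      have hlam1 : lam (n+1) = (m+1)/m := by
        rw [hlamdef, hc1, add_sub_cancel_right]
      have hlam0 : lam n = m/(m-1) := by rw [hlamdef]
      have hlam1pos : 0 < lam (n+1) := hlam_pos _
      have hmono : lam (n+1) ≤ lam n := by
        rw [hlam1, hlam0, div_le_div_iff₀ hm0' hm1']
        nlinarith
      have hres := stmt17_res A hA Jr hJ (lam (n+1)) (lam n) hlam1pos hmono (xs n)
      have hm0'' : m ≠ 0 := hm0'.ne'
      have hm1'' : m - 1 ≠ 0 := hm1'.ne'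
      have hcoef : 1 - lam (n+1)/lam n = 1/m^2 := by
        rw [hlam1, hlam0]
        field_simp
        ring
      have hres2 : ‖Jr (lam (n+1)) (xs n) - Jr (lam n) (xs n)‖ ≤ (1/m^2)*(2*(Kz:ℝ)) := by
        refine le_trans hres ?_
        rw [hcoef]
        exact mul_le_mul_of_nonneg_left (hxJ n) (by positivity)
      have hediff : ‖e (n+1) - e n‖ = (1/m^2 - 1/(m+1)^2) * ‖estar‖ := by
        rw [he (n+1), he n, hc1, ← hmdef, ← sub_smul, norm_smul, Real.norm_eq_abs]
        have hle : 1/(m+1)^2 - 1/m^2 ≤ 0 := by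
          rw [sub_nonpos]
          apply div_le_div_of_nonneg_left (by norm_num) (by positivity)
          nlinarith
        rw [abs_of_nonpos hle]
        ring
      have ha0' : a n = 2/((1-α)*m) := by rw [ha]
      have ha1' : a (n+1) = 2/((1-α)*(m+1)) := by rw [ha, hc1]
      have hid : xs (n+1+1) - xs (n+1)
          = a (n+1) • (f (xs (n+1)) - f (xs n))
            + (1 - a (n+1)) • (Jr (lam (n+1)) (xs (n+1)) - Jr (lam (n+1)) (xs n))
            + (1 - a (n+1)) • (Jr (lam (n+1)) (xs n) - Jr (lam n) (xs n))
            + (a n - a (n+1)) • (Jr (lam n) (xs n) - f (xs n))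
            + (e (n+1) - e n) := by
        rw [hxs (n+1), hxs n]; module
      have hb0 : 0 ≤ a (n+1) := (ha_pos _).le
      have hb1 : a (n+1) ≤ 1 := ha1 _
      have hcb : 0 ≤ a n - a (n+1) := by
        rw [ha0', ha1', sub_nonneg]
        apply div_le_div_of_nonneg_left (by norm_num) (by nlinarith)
        nlinarith
      have hn1 : ‖xs (n+1+1) - xs (n+1)‖
          ≤ a (n+1) * ‖f (xs (n+1)) - f (xs n)‖
            + (1 - a (n+1)) * ‖Jr (lam (n+1)) (xs (n+1)) - Jr (lam (n+1)) (xs n)‖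
            + (1 - a (n+1)) * ‖Jr (lam (n+1)) (xs n) - Jr (lam n) (xs n)‖
            + (a n - a (n+1)) * ‖Jr (lam n) (xs n) - f (xs n)‖
            + ‖e (n+1) - e n‖ := by
        rw [hid]
        refine le_trans (norm_add_le _ _) (add_le_add ?_ le_rfl)
        refine le_trans (norm_add_le _ _) (add_le_add ?_ (le_of_eq ?_))
        · refine le_trans (norm_add_le _ _) (add_le_add ?_ (le_of_eq ?_))
          · refine le_trans (norm_add_le _ _) (add_le_add (le_of_eq ?_) (le_of_eq ?_))
            · rw [norm_smul, Real.norm_eq_abs, abs_of_nonneg hb0]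
            · rw [norm_smul, Real.norm_eq_abs, abs_of_nonneg (by linarith)]
          · rw [norm_smul, Real.norm_eq_abs, abs_of_nonneg (by linarith)]
        · rw [norm_smul, Real.norm_eq_abs, abs_of_nonneg hcb]
      have q1 : a (n+1) * ‖f (xs (n+1)) - f (xs n)‖
          ≤ a (n+1) * (α * ‖xs (n+1) - xs n‖) :=
        mul_le_mul_of_nonneg_left (hf _ _) hb0
      have q2 : (1 - a (n+1)) * ‖Jr (lam (n+1)) (xs (n+1)) - Jr (lam (n+1)) (xs n)‖
          ≤ (1 - a (n+1)) * ‖xs (n+1) - xs n‖ :=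
        mul_le_mul_of_nonneg_left (stmt17_ne A hA Jr hJ _ hlam1pos _ _) (by linarith)
      have q3 : (1 - a (n+1)) * ‖Jr (lam (n+1)) (xs n) - Jr (lam n) (xs n)‖
          ≤ (1 - a (n+1)) * ((1/m^2)*(2*(Kz:ℝ))) :=
        mul_le_mul_of_nonneg_left hres2 (by linarith)
      have q4 : (a n - a (n+1)) * ‖Jr (lam n) (xs n) - f (xs n)‖
          ≤ (a n - a (n+1)) * (2*(Kz:ℝ)) := by
        apply mul_le_mul_of_nonneg_left _ hcb
        rw [norm_sub_rev]
        exact hfJd n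
      have hkey : ‖xs (n+1+1) - xs (n+1)‖
          ≤ a (n+1) * (α * ‖xs (n+1) - xs n‖) + (1 - a (n+1)) * ‖xs (n+1) - xs n‖
            + (1 - a (n+1)) * ((1/m^2)*(2*(Kz:ℝ)))
            + (a n - a (n+1)) * (2*(Kz:ℝ))
            + (1/m^2 - 1/(m+1)^2) * ‖estar‖ := by
        linarith only [hn1, q1, q2, q3, q4, hediff.le]
      have htm : (2:ℝ) ≤ (1-α)*(m+1) := by
        have h := hmt (n+1)
        rwa [hc1] at h
      have := stmt17_ar α (Kz:ℝ) ‖estar‖ (Jn:ℝ) m (‖xs (n+1) - xs n‖)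
        (‖xs (n+1+1) - xs (n+1)‖) (a (n+1)) (a n)
        hα0 hα1 hJ2 hKz0 hE0 hm2n htm (norm_nonneg _) ha1' ha0' ih hkey
      rw [hc1]
      exact this
  refine ⟨fun n => by push_cast; exact hstep n, fun k n hn => ?_⟩
  -- rate conclusion
  have hk0 : (0:ℝ) < (k:ℝ) + 1 := by positivity
  have hPn : ((3 * Jn * Kz + ⌈‖estar‖⌉₊) * ⌈1 / (1 - α)⌉₊ * (k + 1) : ℕ) ≤ n + Jn := by
    omega
  have hPr : (((3 * Jn * Kz + ⌈‖estar‖⌉₊) * ⌈1 / (1 - α)⌉₊ * (k + 1) : ℕ) : ℝ)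
      ≤ (n:ℝ) + Jn := by exact_mod_cast hPn
  have hC0 : (0:ℝ) < 3*(Jn:ℝ)*(Kz:ℝ) + ‖estar‖ := by nlinarith
  have hEceil : ‖estar‖ ≤ (⌈‖estar‖⌉₊ : ℝ) := Nat.le_ceil _
  have hmain : (3*(Jn:ℝ)*(Kz:ℝ) + ‖estar‖) * ((k:ℝ)+1) ≤ (1-α) * ((n:ℝ) + Jn) := by
    have q1 : (1-α) * (((3 * Jn * Kz + ⌈‖estar‖⌉₊) * ⌈1 / (1 - α)⌉₊ * (k + 1) : ℕ) : ℝ)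
        ≤ (1-α) * ((n:ℝ) + Jn) := mul_le_mul_of_nonneg_left hPr ht.le
    have q2 : (1-α) * (((3 * Jn * Kz + ⌈‖estar‖⌉₊) * ⌈1 / (1 - α)⌉₊ * (k + 1) : ℕ) : ℝ)
        = ((3*(Jn:ℝ)*(Kz:ℝ) + (⌈‖estar‖⌉₊:ℝ)) * ((k:ℝ)+1)) * ((1-α) * (⌈1/(1-α)⌉₊:ℝ)) := by
      push_cast
      ring
    have q3 : (3*(Jn:ℝ)*(Kz:ℝ) + ‖estar‖) * ((k:ℝ)+1) * 1
        ≤ ((3*(Jn:ℝ)*(Kz:ℝ) + (⌈‖estar‖⌉₊:ℝ)) * ((k:ℝ)+1)) * ((1-α) * (⌈1/(1-α)⌉₊:ℝ)) := by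
      apply mul_le_mul _ hceil1 zero_le_one (by positivity)
      apply mul_le_mul_of_nonneg_right _ hk0.le
      linarith only [hEceil]
    rw [mul_one] at q3
    linarith only [q1, q2.le, q2.ge, q3]
  have hfin : (3*(Jn:ℝ)*(Kz:ℝ) + ‖estar‖) / ((1-α) * ((n:ℝ) + Jn)) ≤ 1/((k:ℝ)+1) := by
    rw [div_le_div_iff₀ (by linarith [hmt n]) hk0]
    linarith only [hmain]
  calc ‖xs (n + 1) - xs n‖ ≤ (3*(Jn:ℝ)*(Kz:ℝ) + ‖estar‖) / ((1-α) * ((n:ℝ) + Jn)) := hstep n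
  _ ≤ 1/((k:ℝ)+1) := hfin
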